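/- Let m ≥ 1 and let U be the incidence matrix of a symmetric 2-(4m−1, 2m−1, m−1) design, i.e. a (4m−1)×(4m−1) matrix with entries in {0,1} having exactly 2m−1 ones in every row and every column and satisfying U Uᵀ = m·I + (m−1)·J. Let ε ∈ {1, −1} and set a = −1 + 1/(2m) + ε·i·√(4m−1)/(2m). Then the matrix obtained from U by replacing every 0 entry with a is a complex Hadamard matrix of order 4m−1. -/

import Mathlib

open Matrix

/-- `H` is a complex Hadamard matrix: unimodular entries and `H Hᴴ = n • I`. -/
def IsCHadamard {n : Type*} [Fintype n] [DecidableEq n] (H : Matrix n n ℂ) : Prop :=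
  (∀ i j, ‖H i j‖ = 1) ∧
    H * H.conjTranspose = (Fintype.card n : ℂ) • 1

theorem stmt3 (m : ℕ) (hm : 1 ≤ m)
    (U : Matrix (Fin (4 * m - 1)) (Fin (4 * m - 1)) ℂ)
    (hent : ∀ i j, U i j = 0 ∨ U i j = 1)
    (hrow : ∀ i, ∑ j, U i j = ((2 * m - 1 : ℕ) : ℂ))
    (hcol : ∀ j, ∑ i, U i j = ((2 * m - 1 : ℕ) : ℂ))
    (hdes : U * U.transpose =
      (m : ℂ) • 1 + ((m : ℂ) - 1) • Matrix.of (fun _ _ => (1 : ℂ)))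
    (ε : ℝ) (hε : ε = 1 ∨ ε = -1)
    (a : ℂ) (haval : a = -1 + 1 / (2 * m) + ε * Complex.I * Real.sqrt (4 * m - 1) / (2 * m)) :
    IsCHadamard (Matrix.of fun i j => if U i j = 0 then a else U i j) := by
  have hm0 : (m : ℂ) ≠ 0 := Nat.cast_ne_zero.mpr (by omega)
  have hsq : ((Real.sqrt (4 * m - 1) : ℝ) : ℂ) ^ 2 = 4 * (m : ℂ) - 1 := by
    have h1 : (0:ℝ) ≤ 4 * (m:ℝ) - 1 := by
      have : (1:ℝ) ≤ m := by exact_mod_cast hm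
      linarith
    rw [← Complex.ofReal_pow, Real.sq_sqrt h1]
    push_cast; ring
  have hε2 : ((ε : ℝ) : ℂ) ^ 2 = 1 := by
    rcases hε with h | h <;> simp [h]
  have hconj : (starRingEnd ℂ) a
      = -1 + 1 / (2 * m) - ε * Complex.I * Real.sqrt (4 * m - 1) / (2 * m) := by
    rw [haval]
    simp [map_add, map_div₀, _root_.map_mul, Complex.conj_I, Complex.conj_ofReal, map_ofNat]
    ring
  have haa : a * (starRingEnd ℂ) a = 1 := by
    rw [hconj, haval]
    field_simp
    linear_combination (ε:ℂ)^2 * hsq + (4*(m:ℂ)-1) * hε2 - ((ε:ℂ)^2 * ((Real.sqrt (4*m-1):ℂ))^2) * Complex.I_sq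
  have hs : a + (starRingEnd ℂ) a = -2 + 1 / (m : ℂ) := by
    rw [hconj, haval]
    field_simp
    ring
  have habs : ‖a‖ = 1 := by
    have h1 : Complex.normSq a = 1 := by
      have := haa
      rw [Complex.mul_conj] at this
      exact_mod_cast this
    rw [Complex.norm_def, h1, Real.sqrt_one]
  constructor
  · intro i j
    rcases hent i j with h | h <;> simp [h, habs]
  · ext i k
    have hUconj : ∀ i j, (starRingEnd ℂ) (U i j) = U i j := by
      intro i j; rcases hent i j with h | h <;> simp [h]
    have hrow' : ∀ i, ∑ j, U i j = 2 * (m : ℂ) - 1 := by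
      intro i; rw [hrow]; push_cast [Nat.cast_sub (by omega : 1 ≤ 2 * m)]; ring
    have hUU : ∑ j, U i j * U k j
        = (m : ℂ) * (if i = k then 1 else 0) + ((m : ℂ) - 1) := by
      have h := congrFun (congrFun hdes i) k
      simpa [mul_apply, transpose_apply, one_apply, Matrix.smul_apply,
        Matrix.add_apply, mul_ite, mul_one, mul_zero] using h
    have hcard : ((Fintype.card (Fin (4 * m - 1)) : ℕ) : ℂ) = 4 * (m : ℂ) - 1 := by
      rw [Fintype.card_fin]; push_cast [Nat.cast_sub (by omega : 1 ≤ 4 * m)]; ring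
    have hH : ∀ i j, (Matrix.of fun i j => if U i j = 0 then a else U i j) i j
        = (1 - a) * U i j + a := by
      intro i j; rcases hent i j with h | h <;> simp [h]
    simp only [mul_apply, conjTranspose_apply, Matrix.smul_apply, one_apply, hH,
      smul_eq_mul, ← starRingEnd_apply]
    simp only [map_add, _root_.map_mul, map_sub, _root_.map_one, hUconj]
    have expand : ∀ j, ((1 - a) * U i j + a) * ((1 - (starRingEnd ℂ) a) * U k j + (starRingEnd ℂ) a)
        = (1 - a) * (1 - (starRingEnd ℂ) a) * (U i j * U k j)
          + (1 - a) * (starRingEnd ℂ) a * U i j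
          + a * (1 - (starRingEnd ℂ) a) * U k j + a * (starRingEnd ℂ) a := by
      intro j; ring
    rw [Finset.sum_congr rfl fun j _ => expand j]
    rw [Finset.sum_add_distrib, Finset.sum_add_distrib, Finset.sum_add_distrib,
      ← Finset.mul_sum, ← Finset.mul_sum, ← Finset.mul_sum, Finset.sum_const,
      Finset.card_univ, hUU, hrow' i, hrow' k, haa, nsmul_eq_mul, hcard]
    by_cases hik : i = k <;> simp only [hik, if_true, if_false]
    · field_simp
      linear_combination (1 - 2*(m:ℂ)) * haa
    · field_simp
      linear_combination (1 - 3*(m:ℂ)) * haa + (m:ℂ) * hs + mul_inv_cancel₀ hm0
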